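/- On an almost Golden Riemannian manifold, the torsion T⁰ of the first canonical connection ∇⁰_X Y = ∇^g_X Y − (1/2)(∇^g_X J_φ)(J_φ Y) satisfies T⁰(J_φ X, J_φ Y) + T⁰(X, Y) = −(1/2) N_{J_φ}(X, Y) for all vector fields X, Y. -/

import Mathlib

/-- Nijenhuis tensor `N_A(X,Y) = A²[X,Y] + [AX,AY] − A[AX,Y] − A[X,AY]`. -/
def nijenhuis {V : Type*} [LieRing V] [LieAlgebra ℝ V] (A : V →ₗ[ℝ] V) (X Y : V) : V :=
  A (A ⁅X, Y⁆) + ⁅A X, A Y⁆ - A ⁅A X, Y⁆ - A ⁅X, A Y⁆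

/-- The induced almost product structure `J_φ = (1/√5)(2φ − Id)`. -/
noncomputable def inducedJ {V : Type*} [AddCommGroup V] [Module ℝ V] (φ : V →ₗ[ℝ] V) : V →ₗ[ℝ] V :=
  (Real.sqrt 5)⁻¹ • (2 • φ - LinearMap.id)

/-- The first canonical covariant derivative `∇⁰_X Y = ∇_X Y − (1/2)(∇_X J)(J Y)`. -/
noncomputable def firstCanonical {V : Type*} [AddCommGroup V] [Module ℝ V]
    (nab : V →ₗ[ℝ] V →ₗ[ℝ] V) (J : V →ₗ[ℝ] V) (X Y : V) : V :=
  nab X Y - ((1 : ℝ)/2) • (nab X (J (J Y)) - J (nab X (J Y)))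

/-- The torsion `T⁰(X,Y) = ∇⁰_X Y − ∇⁰_Y X − [X,Y]` of the first canonical connection. -/
noncomputable def torsion0 {V : Type*} [LieRing V] [LieAlgebra ℝ V]
    (nab : V →ₗ[ℝ] V →ₗ[ℝ] V) (J : V →ₗ[ℝ] V) (X Y : V) : V :=
  firstCanonical nab J X Y - firstCanonical nab J Y X - ⁅X, Y⁆


lemma inducedJ_sq {V : Type*} [AddCommGroup V] [Module ℝ V] (φ : V →ₗ[ℝ] V)
    (hφ : φ ∘ₗ φ = φ + LinearMap.id) : ∀ v, inducedJ φ (inducedJ φ v) = v := by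
  intro v
  have hφ' : φ (φ v) = φ v + v := by
    have := LinearMap.ext_iff.mp hφ v
    simpa using this
  have h5 : (Real.sqrt 5)⁻¹ * (Real.sqrt 5)⁻¹ = 1/5 := by
    rw [← mul_inv]
    rw [← Real.sqrt_mul_self (by norm_num : (0:ℝ) ≤ 5)]
    norm_num
  simp only [inducedJ, LinearMap.smul_apply, LinearMap.sub_apply, LinearMap.id_apply,
    Module.End.smul_def, map_smul, map_sub, LinearMap.map_smul_of_tower]
  simp only [two_smul, map_add, map_sub, hφ']
  rw [← smul_sub, smul_smul, h5]
  module

lemma torsion0_nijenhuis_key {V : Type*} [LieRing V] [LieAlgebra ℝ V]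
    (nab : V →ₗ[ℝ] V →ₗ[ℝ] V) (J : V →ₗ[ℝ] V) (hJ : ∀ v, J (J v) = v)
    (htf : ∀ X Y : V, nab X Y - nab Y X = ⁅X, Y⁆) :
    ∀ X Y : V, torsion0 nab J (J X) (J Y) + torsion0 nab J X Y
      = -(((1 : ℝ)/2) • nijenhuis J X Y) := by
  intro X Y
  have h1 : nab (J X) Y = ⁅J X, Y⁆ + nab Y (J X) := by
    have := htf (J X) Y; rw [← this]; abel
  have h2 : nab (J Y) X = ⁅J Y, X⁆ + nab X (J Y) := by
    have := htf (J Y) X; rw [← this]; abel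
  have h3 : nab (J X) (J Y) = ⁅J X, J Y⁆ + nab (J Y) (J X) := by
    have := htf (J X) (J Y); rw [← this]; abel
  have h4 : nab X Y = ⁅X, Y⁆ + nab Y X := by
    have := htf X Y; rw [← this]; abel
  simp only [torsion0, firstCanonical, nijenhuis, hJ, h1, h2, h3, h4, map_add, map_neg]
  rw [show (⁅J Y, X⁆ : V) = -⁅X, J Y⁆ from by rw [← lie_skew]]
  simp only [map_add, map_neg]
  module

/-- On an almost Golden Riemannian manifold the torsion of the first canonical connection
satisfies `T⁰(J_φX, J_φY) + T⁰(X,Y) = −(1/2) N_{J_φ}(X,Y)`.  Here `nab` is the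
Levi-Civita connection of `g` (torsion-free and metric, with vector fields acting on
functions `A` via derivations `Dv`). -/
theorem torsion0_nijenhuis {V A : Type*} [LieRing V] [LieAlgebra ℝ V]
    [CommRing A] [Algebra ℝ A]
    (φ : V →ₗ[ℝ] V) (hφ : φ ∘ₗ φ = φ + LinearMap.id)
    (g : V →ₗ[ℝ] V →ₗ[ℝ] A) (hsym : ∀ X Y : V, g X Y = g Y X)
    (hpure : ∀ X Y : V, g (φ X) Y = g X (φ Y))
    (Dv : V → A →ₗ[ℝ] A) (hD : ∀ (X : V) (a b : A), Dv X (a * b) = a * Dv X b + b * Dv X a)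
    (nab : V →ₗ[ℝ] V →ₗ[ℝ] V)
    (htf : ∀ X Y : V, nab X Y - nab Y X = ⁅X, Y⁆)
    (hmetric : ∀ X Y Z : V, Dv X (g Y Z) = g (nab X Y) Z + g Y (nab X Z)) :
    ∀ X Y : V,
      torsion0 nab (inducedJ φ) (inducedJ φ X) (inducedJ φ Y) + torsion0 nab (inducedJ φ) X Y
        = -(((1 : ℝ)/2) • nijenhuis (inducedJ φ) X Y) := by
  exact torsion0_nijenhuis_key nab (inducedJ φ) (inducedJ_sq φ hφ) htf
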